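/- Fix an integer k ≥ 1. There exists a constant C_k > 0 such that the following holds. Let p be a prime, let a_0, a_1, …, a_k ∈ F_p^*, and let t_0 = 0 < t_1 < … < t_k < p be integers. Set D = min over i in {0,…,k} of (max over j ≠ i of gcd(t_j − t_i, p−1)). Then the number Q of x ∈ F_p^* satisfying a_0 + a_1·x^{t_1} + … + a_k·x^{t_k} = 0 satisfies Q ≤ 2·p^{1 − 1/k}·D^{1/k} + C_k·p^{1 − 2/k}·D^{2/k}. -/

import Mathlib

open Polynomial Finset

section helpers

lemma int_gcd_emod' (a : ℤ) (n : ℕ) : Int.gcd (a % (n : ℤ)) (n : ℤ) = Int.gcd a (n : ℤ) := by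
  have h1 : (Int.gcd (a % (n : ℤ)) (n : ℤ) : ℤ) ∣ (Int.gcd a (n : ℤ) : ℤ) := by
    refine Int.dvd_coe_gcd ?_ (Int.gcd_dvd_right ..)
    have h := dvd_add (Int.gcd_dvd_left (a := a % (n : ℤ)) (b := (n : ℤ)))
      ((Int.gcd_dvd_right (a := a % (n : ℤ)) (b := (n : ℤ))).mul_right (a / (n : ℤ)))
    rwa [Int.emod_add_mul_ediv a (n : ℤ)] at h
  have h2 : (Int.gcd a (n : ℤ) : ℤ) ∣ (Int.gcd (a % (n : ℤ)) (n : ℤ) : ℤ) := by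
    refine Int.dvd_coe_gcd ?_ (Int.gcd_dvd_right ..)
    rw [Int.emod_def]
    exact dvd_sub (Int.gcd_dvd_left ..) ((Int.gcd_dvd_right ..).mul_right _)
  exact Nat.dvd_antisymm (Int.natCast_dvd_natCast.mp h1) (Int.natCast_dvd_natCast.mp h2)

lemma pow_eq_of_dvd_sub' {p : ℕ} [Fact p.Prime] (x : ZMod p) (hx : x ≠ 0) {A B : ℕ}
    (h : ((p - 1 : ℕ) : ℤ) ∣ (A : ℤ) - (B : ℤ)) : x ^ A = x ^ B := by
  have hmod : A ≡ B [MOD p - 1] := by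
    rw [Nat.modEq_iff_dvd]
    exact dvd_sub_comm.mp h
  set u : (ZMod p)ˣ := Units.mk0 x hx with hu
  have hord : orderOf u ∣ p - 1 := by
    apply orderOf_dvd_of_pow_eq_one
    ext
    push_cast [hu]
    exact ZMod.pow_card_sub_one_eq_one hx
  have : u ^ A = u ^ B := pow_eq_pow_iff_modEq.mpr (hmod.of_dvd hord)
  calc x ^ A = ((u ^ A : (ZMod p)ˣ) : ZMod p) := by rw [hu]; simp
    _ = ((u ^ B : (ZMod p)ˣ) : ZMod p) := by rw [this]
    _ = x ^ B := by rw [hu]; simp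

lemma same_div_abs {a b w : ℕ} (hw : 0 < w) (h : a / w = b / w) :
    ((a : ℤ) - b).natAbs ≤ w - 1 := by
  have h1 : w * (a / w) + a % w = a := Nat.div_add_mod a w
  have h2 : w * (b / w) + b % w = b := Nat.div_add_mod b w
  have h3 : a % w < w := Nat.mod_lt _ hw
  have h4 : b % w < w := Nat.mod_lt _ hw
  rw [h] at h1
  omega

lemma box_pigeonhole (n R k : ℕ) (hn : 0 < n) (hR : 0 < R) (τ : Fin (k+1) → ℕ) (i₀ : Fin (k+1))
    (hτ : τ i₀ = 0) :
    ∃ (r : ℕ) (s : Fin (k+1) → ℤ), 0 < r ∧ r ≤ R ^ k ∧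
      (∀ j, (n : ℤ) ∣ s j - r * τ j) ∧ (∀ j, (s j).natAbs ≤ n / R) ∧ s i₀ = 0 := by
  classical
  set w : ℕ := n / R + 1 with hw
  have hw0 : 0 < w := Nat.succ_pos _
  have hbox : ∀ m : ℕ, m % n / w < R := by
    intro m
    rw [Nat.div_lt_iff_lt_mul hw0]
    calc m % n < n := Nat.mod_lt _ hn
      _ < R * w := by
          have h1 := Nat.div_add_mod n R
          have h2 : n % R < R := Nat.mod_lt _ hR
          nlinarith [h1, h2]
  have hcard : (Finset.univ : Finset ({j : Fin (k+1) // j ≠ i₀} → Fin R)).card <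
      (Finset.range (R ^ k + 1)).card := by
    rw [Finset.card_univ, Finset.card_range, Fintype.card_fun, Fintype.card_fin]
    have : Fintype.card {j : Fin (k+1) // j ≠ i₀} = k := by
      simp [Fintype.card_subtype_compl]
    rw [this]
    exact Nat.lt_succ_self _
  obtain ⟨r1, hm1, r2, hm2, hne, heq⟩ :=
    Finset.exists_ne_map_eq_of_card_lt_of_maps_to hcard
      (f := fun r (j : {j : Fin (k+1) // j ≠ i₀}) => (⟨r * τ j.1 % n / w, hbox _⟩ : Fin R))
      (fun r _ => Finset.mem_univ _)
  wlog hlt : r2 < r1 generalizing r1 r2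
  · exact this r2 hm2 r1 hm1 hne.symm heq.symm (by omega)
  have hr1 : r1 ≤ R ^ k := by have := Finset.mem_range.mp hm1; omega
  have hdvd : ∀ m : ℕ, (n : ℤ) ∣ ((m % n : ℕ) : ℤ) - (m : ℕ) := by
    intro m
    push_cast
    exact ⟨-((m : ℤ) / n), by rw [Int.emod_def]; ring⟩
  refine ⟨r1 - r2, fun j => ((r1 * τ j % n : ℕ) : ℤ) - ((r2 * τ j % n : ℕ) : ℤ),
    by omega, by omega, ?_, ?_, by simp [hτ]⟩
  · intro j
    have c1 := hdvd (r1 * τ j)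
    have c2 := hdvd (r2 * τ j)
    have key : (((r1 * τ j % n : ℕ) : ℤ) - ((r2 * τ j % n : ℕ) : ℤ)) -
        ((r1 - r2 : ℕ) : ℤ) * τ j =
        (((r1 * τ j % n : ℕ) : ℤ) - (r1 * τ j : ℕ)) -
          (((r2 * τ j % n : ℕ) : ℤ) - (r2 * τ j : ℕ)) := by
      rw [Nat.cast_sub hlt.le]
      push_cast
      ring
    rw [key]
    exact dvd_sub c1 c2
  · intro j
    by_cases hj : j = i₀
    · subst hj; simp [hτ]
    · have := congrFun heq ⟨j, hj⟩
      simp only [Fin.mk.injEq] at this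
      have h := same_div_abs hw0 this
      show (((r1 * τ j % n : ℕ) : ℤ) - ((r2 * τ j % n : ℕ) : ℤ)).natAbs ≤ n / R
      omega

lemma not_dvd_r_mul {n r τ D : ℕ} (hn : 0 < n) (hgD : Nat.gcd τ n ≤ D) (hr : 0 < r)
    (hrD : r * D < n) : ¬ ((n : ℤ) ∣ (r : ℤ) * τ) := by
  intro hd
  have hdn : n ∣ r * τ := by exact_mod_cast hd
  set g : ℕ := Nat.gcd τ n with hg
  have hg0 : 0 < g := Nat.gcd_pos_of_pos_right _ hn
  have hgn : g ∣ n := Nat.gcd_dvd_right _ _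
  have hgτ : g ∣ τ := Nat.gcd_dvd_left _ _
  have hcop : (n / g).Coprime (τ / g) := (Nat.coprime_div_gcd_div_gcd hg0).symm
  have hdvd2 : n / g ∣ r * (τ / g) := by
    have h1 : g * (n / g) ∣ r * (g * (τ / g)) := by
      rw [Nat.mul_div_cancel' hgn, Nat.mul_div_cancel' hgτ]
      exact hdn
    rw [mul_left_comm] at h1
    exact (mul_dvd_mul_iff_left hg0.ne').mp h1
  have hdvdr : n / g ∣ r := hcop.dvd_of_dvd_mul_right hdvd2
  have hle : n / g ≤ r := Nat.le_of_dvd hr hdvdr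
  have : n ≤ r * g := by
    calc n = n / g * g := (Nat.div_mul_cancel hgn).symm
      _ ≤ r * g := Nat.mul_le_mul_right _ hle
  have : r * g ≤ r * D := Nat.mul_le_mul_left _ hgD
  omega

lemma main_count {p k : ℕ} [Fact p.Prime] (a : Fin (k+1) → ZMod p) (i₀ : Fin (k+1))
    (ha : a i₀ ≠ 0) (t τ : Fin (k+1) → ℕ)
    (hτcong : ∀ j, ((p - 1 : ℕ) : ℤ) ∣ ((t i₀ : ℤ) + τ j) - t j) (hτi : τ i₀ = 0)
    (r : ℕ) (s : Fin (k+1) → ℤ)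
    (hdvd : ∀ j, ((p - 1 : ℕ) : ℤ) ∣ s j - r * τ j)
    (hs0 : ∀ j, j ≠ i₀ → s j ≠ 0) (M : ℕ) (hsM : ∀ j, (s j).natAbs ≤ M) (hsi : s i₀ = 0) :
    (Finset.univ.filter (fun x : ZMod p => x ≠ 0 ∧ ∑ j, a j * x ^ t j = 0)).card ≤ 2 * M := by
  classical
  have hp2 : 2 ≤ p := (Fact.out : p.Prime).two_le
  set n : ℕ := p - 1 with hn
  have hn0 : 0 < n := by omega
  set X : Finset (ZMod p) :=
    Finset.univ.filter (fun x : ZMod p => x ≠ 0 ∧ ∑ j, a j * x ^ t j = 0) with hX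
  set U : Finset (ZMod p) := Finset.univ.filter (fun x : ZMod p => x ≠ 0) with hU
  have hXU : X ⊆ U := by
    intro x hx
    simp only [hX, hU, Finset.mem_filter] at hx ⊢
    exact ⟨hx.1, hx.2.1⟩
  have hUcard : U.card = n := by
    simp only [hU, Finset.filter_ne']
    rw [Finset.card_erase_of_mem (Finset.mem_univ _), Finset.card_univ, ZMod.card]
  -- the exponents of the auxiliary polynomial
  set u : Fin (k+1) → ℕ := fun j => (s j + M).toNat with hudef
  have huval : ∀ j, (u j : ℤ) = s j + M := by
    intro j
    have := hsM j
    simp only [hudef]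
    rw [Int.toNat_of_nonneg (by omega)]
  have huM : ∀ j, u j ≤ 2 * M := fun j => by have h1 := hsM j; have h2 := huval j; omega
  have hui : u i₀ = M := by have := huval i₀; rw [hsi] at this; omega
  have huj : ∀ j, j ≠ i₀ → u j ≠ M := by
    intro j hj heq
    have := huval j
    rw [heq] at this
    exact hs0 j hj (by omega)
  set P : ZMod p → Polynomial (ZMod p) := fun c => ∑ j, monomial (u j) (a j * c ^ τ j) with hP
  have hPne : ∀ c : ZMod p, c ≠ 0 → P c ≠ 0 := by
    intro c hc h0
    have hcoeff : (P c).coeff M = a i₀ := by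
      simp only [hP, finset_sum_coeff, coeff_monomial]
      rw [Finset.sum_eq_single i₀]
      · simp [hui, hτi]
      · intro j _ hj
        rw [if_neg (huj j hj)]
      · simp
    rw [h0] at hcoeff
    simp only [coeff_zero] at hcoeff
    exact ha hcoeff.symm
  have hPdeg : ∀ c : ZMod p, (P c).natDegree ≤ 2 * M := fun c =>
    natDegree_sum_le_of_forall_le _ _ (fun j _ => (natDegree_monomial_le _).trans (huM j))
  have hkey : ∀ c y : ZMod p, c ≠ 0 → y ≠ 0 → c * y ^ r ∈ X → (P c).eval y = 0 := by
    intro c y hc hy hmem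
    set x : ZMod p := c * y ^ r with hx
    have hx0 : x ≠ 0 := mul_ne_zero hc (pow_ne_zero _ hy)
    have hsum : ∑ j, a j * x ^ t j = 0 := by
      simp only [hX, Finset.mem_filter] at hmem
      exact hmem.2.2
    have hterm : ∀ j, x ^ t i₀ * (c ^ τ j * y ^ u j) = y ^ M * x ^ t j := by
      intro j
      have hxe : ∀ m : ℕ, x ^ m = c ^ m * y ^ (r * m) := by
        intro m
        rw [hx, mul_pow, ← pow_mul]
      have hc1 : (c : ZMod p) ^ (t i₀ + τ j) = c ^ t j := by
        refine pow_eq_of_dvd_sub' c hc ?_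
        have := hτcong j
        push_cast
        push_cast at this
        convert this using 2
      have hy1 : y ^ (r * t i₀ + u j) = y ^ (M + r * t j) := by
        apply pow_eq_of_dvd_sub' y hy
        have h1 := hdvd j
        have h2 := hτcong j
        have e : ((r * t i₀ + u j : ℕ) : ℤ) - ((M + r * t j : ℕ) : ℤ) =
            (s j - r * τ j) + r * (((t i₀ : ℤ) + τ j) - t j) := by
          push_cast
          rw [huval j]
          ring
        rw [e]
        exact dvd_add h1 (h2.mul_left _)
      calc x ^ t i₀ * (c ^ τ j * y ^ u j)
          = c ^ (t i₀ + τ j) * y ^ (r * t i₀ + u j) := by rw [hxe, pow_add, pow_add]; ring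
        _ = c ^ t j * y ^ (M + r * t j) := by rw [hc1, hy1]
        _ = y ^ M * x ^ t j := by rw [hxe, pow_add]; ring
    have hz : x ^ t i₀ * (P c).eval y = 0 := by
      simp only [hP, eval_finset_sum, eval_monomial]
      rw [Finset.mul_sum]
      calc ∑ j, x ^ t i₀ * (a j * c ^ τ j * y ^ u j)
          = ∑ j, y ^ M * (a j * x ^ t j) := by
            refine Finset.sum_congr rfl fun j _ => ?_
            have h := hterm j
            calc x ^ t i₀ * (a j * c ^ τ j * y ^ u j)
                = a j * (x ^ t i₀ * (c ^ τ j * y ^ u j)) := by ring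
              _ = a j * (y ^ M * x ^ t j) := by rw [h]
              _ = y ^ M * (a j * x ^ t j) := by ring
        _ = y ^ M * ∑ j, a j * x ^ t j := by rw [Finset.mul_sum]
        _ = 0 := by rw [hsum, mul_zero]
    exact (mul_eq_zero.mp hz).resolve_left (pow_ne_zero _ hx0)
  have hcount : ∀ c ∈ U, (U.filter (fun y => c * y ^ r ∈ X)).card ≤ 2 * M := by
    intro c hc
    have hc0 : c ≠ 0 := by
      simp only [hU, Finset.mem_filter] at hc
      exact hc.2
    have hsub : U.filter (fun y => c * y ^ r ∈ X) ⊆ (P c).roots.toFinset := by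
      intro y hy
      simp only [Finset.mem_filter, hU] at hy
      obtain ⟨⟨-, hy0⟩, hmem⟩ := hy
      rw [Multiset.mem_toFinset, mem_roots (hPne c hc0)]
      exact hkey c y hc0 hy0 hmem
    calc (U.filter (fun y => c * y ^ r ∈ X)).card
        ≤ (P c).roots.toFinset.card := Finset.card_le_card hsub
      _ ≤ Multiset.card (P c).roots := (P c).roots.toFinset_card_le
      _ ≤ (P c).natDegree := (P c).card_roots'
      _ ≤ 2 * M := hPdeg c
  have e2 : ∀ y ∈ U, (U.filter (fun c => c * y ^ r ∈ X)).card = X.card := by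
    intro y hy
    have hy0 : y ≠ 0 := by
      simp only [hU, Finset.mem_filter] at hy
      exact hy.2
    have hyr : y ^ r ≠ 0 := pow_ne_zero _ hy0
    refine Finset.card_bij' (fun c _ => c * y ^ r) (fun x _ => x * (y ^ r)⁻¹) ?_ ?_ ?_ ?_
    · intro c hc
      exact (Finset.mem_filter.mp hc).2
    · intro x hx
      have hx' := hXU hx
      simp only [hU, Finset.mem_filter] at hx'
      refine Finset.mem_filter.mpr ⟨Finset.mem_filter.mpr
        ⟨Finset.mem_univ _, mul_ne_zero hx'.2 (inv_ne_zero hyr)⟩, ?_⟩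
      rw [mul_assoc, inv_mul_cancel₀ hyr, mul_one]
      exact hx
    · intro c hc
      field_simp
    · intro x hx
      field_simp
  have e1 : ∑ c ∈ U, (U.filter (fun y => c * y ^ r ∈ X)).card
      = ∑ y ∈ U, (U.filter (fun c => c * y ^ r ∈ X)).card := by
    simp only [Finset.card_filter]
    exact Finset.sum_comm
  have hfinal : n * X.card ≤ n * (2 * M) := by
    calc n * X.card = ∑ y ∈ U, X.card := by rw [Finset.sum_const, hUcard, smul_eq_mul]
      _ = ∑ y ∈ U, (U.filter (fun c => c * y ^ r ∈ X)).card := by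
          exact (Finset.sum_congr rfl e2).symm
      _ = ∑ c ∈ U, (U.filter (fun y => c * y ^ r ∈ X)).card := e1.symm
      _ ≤ ∑ c ∈ U, (2 * M) := Finset.sum_le_sum hcount
      _ = n * (2 * M) := by rw [Finset.sum_const, hUcard, smul_eq_mul]
  exact Nat.le_of_mul_le_mul_left hfinal hn0

end helpers

set_option maxHeartbeats 2000000 in
theorem card_zeros_lacunary_bound (k : ℕ) (hk : 1 ≤ k) :
    ∃ C : ℝ, 0 < C ∧
      ∀ (p : ℕ), p.Prime →
        ∀ (a : Fin (k + 1) → ZMod p), (∀ i, a i ≠ 0) →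
          ∀ (t : Fin (k + 1) → ℕ), t 0 = 0 → StrictMono t → t (Fin.last k) < p →
            (Set.ncard {x : ZMod p | x ≠ 0 ∧ ∑ i : Fin (k + 1), a i * x ^ t i = 0} : ℝ) ≤
              2 * (p : ℝ) ^ (1 - 1 / (k : ℝ)) *
                  ((Finset.univ.inf' Finset.univ_nonempty fun i : Fin (k + 1) =>
                    (Finset.univ.erase i).sup fun j : Fin (k + 1) =>
                      Int.gcd ((t j : ℤ) - (t i : ℤ)) ((p : ℤ) - 1) : ℕ) : ℝ) ^ (1 / (k : ℝ)) +
                C * (p : ℝ) ^ (1 - 2 / (k : ℝ)) *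
                  ((Finset.univ.inf' Finset.univ_nonempty fun i : Fin (k + 1) =>
                    (Finset.univ.erase i).sup fun j : Fin (k + 1) =>
                      Int.gcd ((t j : ℤ) - (t i : ℤ)) ((p : ℤ) - 1) : ℕ) : ℝ) ^ (2 / (k : ℝ)) := by
  classical
  refine ⟨64, by norm_num, ?_⟩
  intro p hp a ha t ht0 htmono htlt
  haveI : Fact p.Prime := ⟨hp⟩
  have hp2 : 2 ≤ p := hp.two_le
  set n : ℕ := p - 1 with hn
  have hn0 : 0 < n := by omega
  have hk0 : (k : ℝ) ≠ 0 := by positivity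
  set D : ℕ := Finset.univ.inf' Finset.univ_nonempty fun i : Fin (k + 1) =>
      (Finset.univ.erase i).sup fun j : Fin (k + 1) =>
        Int.gcd ((t j : ℤ) - (t i : ℤ)) ((p : ℤ) - 1) with hD
  -- replace the set by a finset
  have hset : {x : ZMod p | x ≠ 0 ∧ ∑ i : Fin (k+1), a i * x ^ t i = 0} =
      ↑(Finset.univ.filter (fun x : ZMod p => x ≠ 0 ∧ ∑ i : Fin (k+1), a i * x ^ t i = 0)) := by
    ext x
    simp
  rw [hset, Set.ncard_coe_finset]
  set Q : ℕ := (Finset.univ.filter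
      (fun x : ZMod p => x ≠ 0 ∧ ∑ i : Fin (k+1), a i * x ^ t i = 0)).card with hQ
  -- basic facts about D
  obtain ⟨i₀, -, hDi⟩ := Finset.exists_mem_eq_inf' (Finset.univ_nonempty)
      (fun i : Fin (k + 1) => (Finset.univ.erase i).sup fun j : Fin (k + 1) =>
        Int.gcd ((t j : ℤ) - (t i : ℤ)) ((p : ℤ) - 1))
  have hDle : ∀ j, j ≠ i₀ → Int.gcd ((t j : ℤ) - (t i₀ : ℤ)) ((p : ℤ) - 1) ≤ D := by
    intro j hj
    rw [hD, hDi]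
    exact Finset.le_sup (f := fun j : Fin (k+1) => Int.gcd ((t j : ℤ) - (t i₀ : ℤ)) ((p : ℤ) - 1))
      (Finset.mem_erase.mpr ⟨hj, Finset.mem_univ _⟩)
  have hD1 : 1 ≤ D := by
    have hne : ((Finset.univ : Finset (Fin (k+1))).erase i₀).Nonempty := by
      rw [← Finset.card_pos, Finset.card_erase_of_mem (Finset.mem_univ _), Finset.card_univ,
        Fintype.card_fin]
      omega
    obtain ⟨j, hj⟩ := hne
    have hj' : j ≠ i₀ := (Finset.mem_erase.mp hj).1
    have : 0 < Int.gcd ((t j : ℤ) - (t i₀ : ℤ)) ((p : ℤ) - 1) := by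
      apply Int.gcd_pos_of_ne_zero_left
      have := htmono.injective.ne hj'
      intro hc
      have : (t j : ℤ) = t i₀ := by omega
      exact (htmono.injective.ne hj') (by exact_mod_cast this)
    have := hDle j hj'
    omega
  have hD0 : (0 : ℝ) < D := by exact_mod_cast hD1
  have hcastn : ((p : ℤ) - 1) = ((n : ℕ) : ℤ) := by push_cast; omega
  -- the normalized exponents
  set τ : Fin (k+1) → ℕ := fun j => (((t j : ℤ) - t i₀) % (n : ℤ)).toNat with hτ
  have hτval : ∀ j, (τ j : ℤ) = ((t j : ℤ) - t i₀) % (n : ℤ) := by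
    intro j
    rw [hτ]
    exact Int.toNat_of_nonneg (Int.emod_nonneg _ (by exact_mod_cast hn0.ne'))
  have hτi : τ i₀ = 0 := by
    rw [hτ]
    simp
  have hτcong : ∀ j, ((p - 1 : ℕ) : ℤ) ∣ ((t i₀ : ℤ) + τ j) - t j := by
    intro j
    rw [hτval j]
    have : ((t i₀ : ℤ) + ((t j : ℤ) - t i₀) % (n : ℤ)) - t j =
        ((t j : ℤ) - t i₀) % (n : ℤ) - ((t j : ℤ) - t i₀) := by ring
    rw [this, Int.emod_def]
    exact ⟨-(((t j : ℤ) - t i₀) / n), by ring⟩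
  have hτgcd : ∀ j, j ≠ i₀ → Nat.gcd (τ j) n ≤ D := by
    intro j hj
    have h1 : Nat.gcd (τ j) n = Int.gcd ((τ j : ℤ)) ((n : ℕ) : ℤ) := by
      rw [Int.gcd_natCast_natCast]
    rw [h1, hτval j, int_gcd_emod', ← hcastn]
    exact hDle j hj
  -- trivial bound Q ≤ n
  have hQn : Q ≤ n := by
    rw [hQ]
    have : (Finset.univ.filter
        (fun x : ZMod p => x ≠ 0 ∧ ∑ i : Fin (k+1), a i * x ^ t i = 0)) ⊆
        Finset.univ.filter (fun x : ZMod p => x ≠ 0) := by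
      intro x hx
      simp only [Finset.mem_filter] at hx ⊢
      exact ⟨hx.1, hx.2.1⟩
    calc _ ≤ (Finset.univ.filter (fun x : ZMod p => x ≠ 0)).card := Finset.card_le_card this
      _ = n := by
          rw [Finset.filter_ne', Finset.card_erase_of_mem (Finset.mem_univ _),
            Finset.card_univ, ZMod.card]
  by_cases hcase : n ≤ D * 4 ^ k
  · -- trivial case
    have hQp : (Q : ℝ) ≤ p := by
      have : Q ≤ p := le_trans hQn (by omega)
      exact_mod_cast this
    have hterm : (p : ℝ) ≤ 64 * (p : ℝ) ^ (1 - 2 / (k : ℝ)) * (D : ℝ) ^ (2 / (k : ℝ)) := by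
      have hp0 : (0:ℝ) < p := by positivity
      have hkR : (1:ℝ) ≤ (k:ℝ) := by exact_mod_cast hk
      have hD16 : ((n:ℝ)) ^ (2/(k:ℝ)) / 16 ≤ (D:ℝ) ^ (2/(k:ℝ)) := by
        have h1 : (n:ℝ)/4^k ≤ D := by
          rw [div_le_iff₀ (by positivity)]
          exact_mod_cast hcase
        have h2 := Real.rpow_le_rpow (by positivity) h1 (by positivity : (0:ℝ) ≤ 2/(k:ℝ))
        rw [Real.div_rpow (Nat.cast_nonneg n) (by positivity)] at h2
        have h3 : ((4:ℝ)^k) ^ (2/(k:ℝ)) = 16 := by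
          rw [← Real.rpow_natCast (4:ℝ) k, ← Real.rpow_mul (by norm_num)]
          have he : (k:ℝ) * (2/(k:ℝ)) = 2 := by field_simp
          rw [he]
          norm_num
        rw [h3] at h2
        linarith
      have hnple : (n:ℝ)/p ≤ 1 := by
        rw [div_le_one hp0]
        exact_mod_cast Nat.sub_le p 1
      have hnp : (1:ℝ)/2 ≤ (n:ℝ)/p := by
        rw [div_le_div_iff₀ (by norm_num) hp0]
        have h2n : (p:ℝ) ≤ 2 * n := by exact_mod_cast (by omega : p ≤ 2 * n)
        linarith
      have hq : (1:ℝ)/4 ≤ ((n:ℝ)/p) ^ (2/(k:ℝ)) := by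
        have h5 : ((n:ℝ)/p)^(2:ℝ) ≤ ((n:ℝ)/p)^(2/(k:ℝ)) := by
          apply Real.rpow_le_rpow_of_exponent_ge (by positivity) hnple
          rw [div_le_iff₀ (by positivity)]
          nlinarith
        have h6 : (1:ℝ)/4 ≤ ((n:ℝ)/p)^(2:ℝ) := by
          rw [show ((2:ℝ)) = ((2:ℕ):ℝ) by norm_num, Real.rpow_natCast]
          nlinarith [hnp]
        linarith
      have hid : (p:ℝ)^(1-2/(k:ℝ)) * (n:ℝ)^(2/(k:ℝ)) = p * ((n:ℝ)/p)^(2/(k:ℝ)) := by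
        rw [Real.div_rpow (Nat.cast_nonneg n) (Nat.cast_nonneg p), Real.rpow_sub hp0,
          Real.rpow_one]
        ring
      have hppos : (0:ℝ) ≤ (p:ℝ)^(1-2/(k:ℝ)) := Real.rpow_nonneg (Nat.cast_nonneg p) _
      calc (p:ℝ) = 4 * (p:ℝ) * (1/4) := by ring
        _ ≤ 4 * p * ((n:ℝ)/p)^(2/(k:ℝ)) := by nlinarith [hq, hp0]
        _ = 4 * ((p:ℝ)^(1-2/(k:ℝ)) * (n:ℝ)^(2/(k:ℝ))) := by rw [hid]; ring
        _ = 64 * (p : ℝ)^(1-2/(k:ℝ)) * ((n:ℝ)^(2/(k:ℝ))/16) := by ring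
        _ ≤ 64 * (p : ℝ)^(1-2/(k:ℝ)) * (D : ℝ)^(2/(k:ℝ)) := by nlinarith [hD16, hppos]
    have hpos : 0 ≤ 2 * (p : ℝ) ^ (1 - 1 / (k : ℝ)) * (D : ℝ) ^ (1 / (k : ℝ)) := by positivity
    calc (Q : ℝ) ≤ p := hQp
      _ ≤ 64 * (p : ℝ) ^ (1 - 2 / (k : ℝ)) * (D : ℝ) ^ (2 / (k : ℝ)) := hterm
      _ ≤ _ := le_add_of_nonneg_left hpos
  · -- main case
    push_neg at hcase
    set R : ℕ := ⌊(((n : ℝ) - D) / D) ^ (1 / (k : ℝ))⌋₊ with hR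
    have h4k : (4 : ℝ) ^ k ≤ 4 ^ (k : ℕ) := le_refl _
    have hnD4 : (D : ℝ) * 4 ^ k < n := by exact_mod_cast hcase
    have h4 : (4 : ℝ) ≤ 4 ^ k := by
      calc (4 : ℝ) = 4 ^ 1 := (pow_one _).symm
        _ ≤ 4 ^ k := pow_le_pow_right₀ (by norm_num) hk
    have hx0 : (1 : ℝ) ≤ ((n : ℝ) - D) / D := by
      rw [le_div_iff₀ hD0]
      nlinarith [hD0, h4, hnD4]
    have hxpos : (0:ℝ) < ((n : ℝ) - D) / D := lt_of_lt_of_le one_pos hx0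
    have hR1 : 1 ≤ R := by
      rw [hR]
      apply Nat.le_floor
      rw [Nat.cast_one]
      calc (1:ℝ) = 1 ^ (1/(k:ℝ)) := (Real.one_rpow _).symm
        _ ≤ (((n : ℝ) - D) / D) ^ (1/(k:ℝ)) := Real.rpow_le_rpow (by norm_num) hx0 (by positivity)
    have hRk : ((R:ℝ)) ^ (k:ℕ) ≤ ((n : ℝ) - D) / D := by
      have h1 : (R : ℝ) ≤ (((n : ℝ) - D) / D) ^ (1 / (k:ℝ)) := by
        rw [hR]
        exact Nat.floor_le (by positivity)
      calc ((R:ℝ))^(k:ℕ) ≤ ((((n : ℝ) - D) / D) ^ (1/(k:ℝ)))^(k:ℕ) :=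
            pow_le_pow_left₀ (by positivity) h1 k
        _ = ((n : ℝ) - D) / D := by
            rw [← Real.rpow_natCast ((((n : ℝ) - D) / D) ^ (1/(k:ℝ))) k,
              ← Real.rpow_mul hxpos.le, one_div, inv_mul_cancel₀ hk0, Real.rpow_one]
    have hRkD : R ^ k * D < n := by
      have hcast : ((R ^ k * D : ℕ) : ℝ) < n := by
        push_cast
        calc (R:ℝ)^k * D ≤ (((n:ℝ) - D)/D) * D := mul_le_mul_of_nonneg_right hRk hD0.le
          _ = (n:ℝ) - D := div_mul_cancel₀ _ hD0.ne'
          _ < n := by linarith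
      exact_mod_cast hcast
    obtain ⟨r, s, hr0, hrRk, hdvds, hsabs, hsi⟩ := box_pigeonhole n R k hn0 hR1 τ i₀ hτi
    have hs0 : ∀ j, j ≠ i₀ → s j ≠ 0 := by
      intro j hj hzero
      apply not_dvd_r_mul hn0 (hτgcd j hj) hr0 (show r * D < n from
        lt_of_le_of_lt (Nat.mul_le_mul_right _ hrRk) hRkD)
      have hd := hdvds j
      rw [hzero] at hd
      exact dvd_neg.mp (by simpa using hd)
    have hQ2M : Q ≤ 2 * (n / R) := by
      rw [hQ]
      exact main_count a i₀ (ha i₀) t τ hτcong hτi r s hdvds hs0 (n / R) hsabs hsi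
    set B : ℝ := ((n:ℝ)/D) ^ (1/(k:ℝ)) with hB
    have hB0 : 0 < B := by positivity
    have hB4 : 4 < B := by
      have h1 : ((4:ℝ)^k) ^ (1/(k:ℝ)) < B := by
        apply Real.rpow_lt_rpow (by positivity) ?_ (by positivity)
        rw [lt_div_iff₀ hD0]
        nlinarith [hnD4]
      calc (4:ℝ) = ((4:ℝ)^k)^(1/(k:ℝ)) := by
            rw [← Real.rpow_natCast (4:ℝ) k, ← Real.rpow_mul (by norm_num), mul_one_div,
              div_self hk0, Real.rpow_one]
        _ < B := h1
    set v : ℝ := (((n:ℝ) - D)/D) ^ (1/(k:ℝ)) with hv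
    have hv0 : (0:ℝ) ≤ v := by positivity
    have hRu : v - 1 < (R:ℝ) := by
      rw [hR]
      exact Nat.sub_one_lt_floor _
    have hBu : B ≤ v + 1 := by
      have h2 : v^(k:ℕ) + 1 ≤ (v+1)^(k:ℕ) := by
        have h2' := pow_add_pow_le hv0 (by norm_num : (0:ℝ) ≤ 1) (by omega : k ≠ 0)
        simpa using h2'
      have h3 : v^(k:ℕ) = ((n:ℝ) - D)/D := by
        rw [hv, ← Real.rpow_natCast _ k, ← Real.rpow_mul hxpos.le, one_div,
          inv_mul_cancel₀ hk0, Real.rpow_one]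
      rw [h3] at h2
      have h4 : ((n:ℝ) - D)/D + 1 = (n:ℝ)/D := by field_simp; ring
      rw [h4] at h2
      calc B ≤ ((v+1)^(k:ℕ)) ^ (1/(k:ℝ)) := Real.rpow_le_rpow (by positivity) h2 (by positivity)
        _ = v + 1 := by
            rw [← Real.rpow_natCast (v+1) k, ← Real.rpow_mul (by positivity), mul_one_div,
              div_self hk0, Real.rpow_one]
    have hRB : B - 2 ≤ (R : ℝ) := by linarith
    have hB2 : (0:ℝ) < B - 2 := by linarith
    have hQR : (Q:ℝ) ≤ 2 * ((n:ℝ)/R) := by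
      have h1 : (Q:ℝ) ≤ 2 * ((n / R : ℕ) : ℝ) := by exact_mod_cast hQ2M
      have h2 : ((n / R : ℕ) : ℝ) ≤ (n:ℝ)/R := Nat.cast_div_le
      linarith
    have hRpos : (0:ℝ) < R := by
      have : (1:ℝ) ≤ R := by exact_mod_cast hR1
      linarith
    have hchain1 : (n:ℝ)/R ≤ (n:ℝ)/(B-2) :=
      div_le_div_of_nonneg_left (by positivity) hB2 hRB
    have hkey : 1/(B-2) ≤ 1/B + 4/B^2 := by
      rw [div_add_div _ _ (ne_of_gt hB0) (by positivity), div_le_div_iff₀ hB2 (by positivity)]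
      nlinarith [hB4, hB0]
    have hchain2 : 2*((n:ℝ)/(B-2)) ≤ 2*((n:ℝ)/B) + 8*((n:ℝ)/B^2) := by
      have hmul := mul_le_mul_of_nonneg_left hkey (by positivity : (0:ℝ) ≤ 2*(n:ℝ))
      calc 2*((n:ℝ)/(B-2)) = 2*(n:ℝ) * (1/(B-2)) := by ring
        _ ≤ 2*(n:ℝ) * (1/B + 4/B^2) := hmul
        _ = 2*((n:ℝ)/B) + 8*((n:ℝ)/B^2) := by ring
    have hnpos : (0:ℝ) < n := by exact_mod_cast hn0
    have hnB : (n:ℝ)/B = (n:ℝ)^(1 - 1/(k:ℝ)) * (D:ℝ)^(1/(k:ℝ)) := by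
      rw [hB, Real.div_rpow (Nat.cast_nonneg n) (Nat.cast_nonneg D), div_div_eq_mul_div,
        Real.rpow_sub hnpos, Real.rpow_one]
      ring
    have hnB2 : (n:ℝ)/B^2 = (n:ℝ)^(1 - 2/(k:ℝ)) * (D:ℝ)^(2/(k:ℝ)) := by
      have hBsq : B^2 = ((n:ℝ)/D) ^ (2/(k:ℝ)) := by
        rw [hB, ← Real.rpow_natCast (((n:ℝ)/D) ^ (1/(k:ℝ))) 2, ← Real.rpow_mul (by positivity)]
        congr 1
        push_cast
        ring
      rw [hBsq, Real.div_rpow (Nat.cast_nonneg n) (Nat.cast_nonneg D), div_div_eq_mul_div,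
        Real.rpow_sub hnpos, Real.rpow_one]
      ring
    have hkR : (1:ℝ) ≤ (k:ℝ) := by exact_mod_cast hk
    have hnp : (n:ℝ) ≤ p := by exact_mod_cast Nat.sub_le p 1
    have hfin1 : 2*((n:ℝ)/B) ≤ 2 * (p:ℝ)^(1-1/(k:ℝ)) * (D:ℝ)^(1/(k:ℝ)) := by
      rw [hnB]
      have h1 : (n:ℝ)^(1-1/(k:ℝ)) ≤ (p:ℝ)^(1-1/(k:ℝ)) := by
        apply Real.rpow_le_rpow (Nat.cast_nonneg n) hnp
        have : 1/(k:ℝ) ≤ 1 := by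
          rw [div_le_one (by positivity)]
          exact hkR
        linarith
      have h2 : (0:ℝ) ≤ (D:ℝ)^(1/(k:ℝ)) := Real.rpow_nonneg (Nat.cast_nonneg D) _
      nlinarith
    have hfin2 : 8*((n:ℝ)/B^2) ≤ 64 * (p:ℝ)^(1-2/(k:ℝ)) * (D:ℝ)^(2/(k:ℝ)) := by
      rw [hnB2]
      have key : (n:ℝ)^(1-2/(k:ℝ)) ≤ 8 * (p:ℝ)^(1-2/(k:ℝ)) := by
        rcases eq_or_lt_of_le hk with hk1 | hk2
        · have hkeq : (k:ℝ) = 1 := by exact_mod_cast hk1.symm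
          have hexp : 1 - 2/(k:ℝ) = -1 := by rw [hkeq]; norm_num
          rw [hexp, Real.rpow_neg_one, Real.rpow_neg_one]
          have hp0 : (0:ℝ) < p := by positivity
          rw [← one_div, show (8:ℝ)*(p:ℝ)⁻¹ = 8/p by ring, div_le_div_iff₀ hnpos hp0]
          have h8n : (p:ℝ) ≤ 8 * n := by exact_mod_cast (by omega : p ≤ 8 * n)
          linarith
        · have he : 0 ≤ 1 - 2/(k:ℝ) := by
            have h2k : (2:ℝ) ≤ k := by exact_mod_cast hk2
            have : 2/(k:ℝ) ≤ 1 := by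
              rw [div_le_one (by positivity)]
              exact h2k
            linarith
          have h1 := Real.rpow_le_rpow (Nat.cast_nonneg n) hnp he
          have h2 : (0:ℝ) ≤ (p:ℝ)^(1-2/(k:ℝ)) := Real.rpow_nonneg (Nat.cast_nonneg p) _
          linarith
      have h2 : (0:ℝ) ≤ (D:ℝ)^(2/(k:ℝ)) := Real.rpow_nonneg (Nat.cast_nonneg D) _
      nlinarith
    calc (Q:ℝ) ≤ 2 * ((n:ℝ)/R) := hQR
      _ ≤ 2 * ((n:ℝ)/(B-2)) := by linarith
      _ ≤ 2 * ((n:ℝ)/B) + 8 * ((n:ℝ)/B^2) := hchain2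
      _ ≤ 2 * (p:ℝ)^(1-1/(k:ℝ)) * (D:ℝ)^(1/(k:ℝ)) +
          64 * (p:ℝ)^(1-2/(k:ℝ)) * (D:ℝ)^(2/(k:ℝ)) := by linarith
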